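/- arXiv:2110.00856 — 2 statements merged into one kernel-verified Lean document; each statement's English description precedes it below -/
import Mathlib

section
/- Let $F$ be a field, let $D \ge 1$ and $b \ge 0$ be integers, and for each $k = 1, \ldots, D$ let $B^{(k)}$ be an invertible lower triangular $(b+1) \times (b+1)$ matrix over $F$ (indices running from $1$ to $b+1$). Let $f$ be an $F$-valued function on the sparse grid index set $\{\mathbf{a} \in \{1, \ldots, b+1\}^D : \sum_{k=1}^D (a_k - 1) \le b\}$. For each multi-index $\mathbf{i}$ with $\sum_{k=1}^D (i_k - 1) \le b$, define $C_{\mathbf{i}} = \sum_{\mathbf{a} : a_k \le i_k \,\forall k} \prod_{k=1}^D \big[(B^{(k)})^{-1}\big]_{i_k, a_k} \, f(\mathbf{a})$. Then for every $\mathbf{a}$ with $\sum_{k=1}^D (a_k - 1) \le b$ one has $\sum_{\mathbf{i} : \sum_k (i_k - 1) \le b} C_{\mathbf{i}} \prod_{k=1}^D B^{(k)}_{a_k, i_k} = f(\mathbf{a})$. -/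
/-- With invertible lower triangular 1-D matrices `B k` (ZAPPL basis
evaluation matrices), the coefficients `C i` computed by the restricted (sequential)
sums `a k ≤ i k` reproduce the function values `f a` at all sparse grid points
`∑ (a k - 1) ≤ b`.  Indices are 0-based: `(i k : ℕ)` plays the role of `i_k - 1`. -/
theorem sparse_grid_interpolation {F : Type*} [Field F] (D b : ℕ) (hD : 1 ≤ D)
    (B : Fin D → Matrix (Fin (b + 1)) (Fin (b + 1)) F)
    (hinv : ∀ k, IsUnit (B k))
    (hlow : ∀ k, ∀ a i : Fin (b + 1), a < i → B k a i = 0)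
    (f : (Fin D → Fin (b + 1)) → F)
    (C : (Fin D → Fin (b + 1)) → F)
    (hC : ∀ i : Fin D → Fin (b + 1), (∑ k, ((i k : ℕ))) ≤ b →
      C i = ∑ a ∈ Finset.univ.filter (fun a : Fin D → Fin (b + 1) => ∀ k, a k ≤ i k),
        (∏ k, (B k)⁻¹ (i k) (a k)) * f a) :
    ∀ a : Fin D → Fin (b + 1), (∑ k, ((a k : ℕ))) ≤ b →
      (∑ i ∈ Finset.univ.filter (fun i : Fin D → Fin (b + 1) => (∑ k, ((i k : ℕ))) ≤ b),
        C i * ∏ k, B k (a k) (i k)) = f a := by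
  intro a ha
  -- inverse of lower triangular is lower triangular
  have hinvlow : ∀ k, ∀ x i : Fin (b + 1), x < i → (B k)⁻¹ x i = 0 := by
    intro k x i hxi
    haveI := (hinv k).invertible
    have hBT : Matrix.BlockTriangular (B k) (fun j : Fin (b+1) => OrderDual.toDual j) := by
      intro p q hpq
      exact hlow k p q hpq
    exact Matrix.blockTriangular_inv_of_blockTriangular hBT hxi
  -- g is the unrestricted coefficient formula
  -- restricted sum defining C equals unrestricted sum
  have hCg : ∀ i : Fin D → Fin (b + 1), (∑ k, ((i k : ℕ))) ≤ b →
      C i = ∑ a' : Fin D → Fin (b+1), (∏ k, (B k)⁻¹ (i k) (a' k)) * f a' := by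
    intro i hi
    rw [hC i hi]
    refine Finset.sum_filter_of_ne ?_
    intro a' _ hne k
    by_contra hk
    push_neg at hk
    exact hne (by
      rw [Finset.prod_eq_zero (Finset.mem_univ k) (hinvlow k (i k) (a' k) hk), zero_mul])
  -- extend outer sum to all i
  have h1 : (∑ i ∈ Finset.univ.filter
      (fun i : Fin D → Fin (b + 1) => (∑ k, ((i k : ℕ))) ≤ b),
        C i * ∏ k, B k (a k) (i k))
      = ∑ i : Fin D → Fin (b+1),
        (∑ a' : Fin D → Fin (b+1), (∏ k, (B k)⁻¹ (i k) (a' k)) * f a') * ∏ k, B k (a k) (i k) := by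
    rw [Finset.sum_filter]
    refine Finset.sum_congr rfl ?_
    intro i _
    by_cases hi : (∑ k, ((i k : ℕ))) ≤ b
    · rw [if_pos hi, hCg i hi]
    · rw [if_neg hi]
      -- the product of B entries vanishes
      have : (∏ k, B k (a k) (i k)) = 0 := by
        by_contra hne
        apply hi
        calc (∑ k, ((i k : ℕ))) ≤ ∑ k, ((a k : ℕ)) := by
              refine Finset.sum_le_sum ?_
              intro k _
              by_contra hk
              push_neg at hk
              have : a k < i k := by exact_mod_cast hk
              exact hne (Finset.prod_eq_zero (Finset.mem_univ k) (hlow k (a k) (i k) this))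
          _ ≤ b := ha
      rw [this, mul_zero]
  rw [h1]
  -- rearrange: swap sums and split products
  have h2 : (∑ i : Fin D → Fin (b+1),
      (∑ a' : Fin D → Fin (b+1), (∏ k, (B k)⁻¹ (i k) (a' k)) * f a') * ∏ k, B k (a k) (i k))
      = ∑ a' : Fin D → Fin (b+1), (∏ k, (B k * (B k)⁻¹) (a k) (a' k)) * f a' := by
    simp only [Finset.sum_mul]
    rw [Finset.sum_comm]
    refine Finset.sum_congr rfl ?_
    intro a' _
    have h2' : ∀ i : Fin D → Fin (b+1),
        ((∏ k, (B k)⁻¹ (i k) (a' k)) * f a') * ∏ k, B k (a k) (i k)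
        = (∏ k, B k (a k) (i k) * (B k)⁻¹ (i k) (a' k)) * f a' := by
      intro i
      rw [Finset.prod_mul_distrib]
      ring
    rw [Finset.sum_congr rfl (fun i _ => h2' i), ← Finset.sum_mul]
    congr 1
    have hma : ∀ k : Fin D, (B k * (B k)⁻¹) (a k) (a' k)
        = ∑ x, B k (a k) x * (B k)⁻¹ x (a' k) := fun k => Matrix.mul_apply
    rw [Finset.prod_congr rfl (fun k _ => hma k), Fintype.prod_sum]
  rw [h2]
  have h3 : ∀ k, B k * (B k)⁻¹ = 1 := fun k =>
    Matrix.mul_nonsing_inv (B k) ((Matrix.isUnit_iff_isUnit_det (B k)).mp (hinv k))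
  simp only [h3, Matrix.one_apply]
  rw [Finset.sum_eq_single a]
  · simp
  · intro a' _ hne
    have : ∃ k, a k ≠ a' k := by
      by_contra h
      push_neg at h
      exact hne (funext fun k => (h k).symm)
    obtain ⟨k, hk⟩ := this
    rw [Finset.prod_eq_zero (Finset.mem_univ k)
      (if_neg hk : (if a k = a' k then (1:F) else 0) = 0), zero_mul]
  · intro h
    exact absurd (Finset.mem_univ a) h
end

section
/- Let $F$ be a field, let $D \ge 1$, and for each $k = 1, \ldots, D$ let $B^{(k)}$ be an invertible lower triangular $n_k \times n_k$ matrix over $F$. Let $S$ be a downward closed subset of the product index set $\prod_{k=1}^D \{1, \ldots, n_k\}$, i.e. if $\mathbf{i} \in S$ and $a_k \le i_k$ for all $k$ then $\mathbf{a} \in S$. Let $M$ be the Kronecker product matrix with entries $M_{\mathbf{a}, \mathbf{i}} = \prod_{k=1}^D B^{(k)}_{a_k, i_k}$. Then the restriction $M|_{S \times S}$ is invertible, and $\big(M|_{S \times S}\big)^{-1}$ has entries $\big[\big(M|_{S \times S}\big)^{-1}\big]_{\mathbf{i}, \mathbf{a}} = \prod_{k=1}^D \big[(B^{(k)})^{-1}\big]_{i_k,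 a_k}$ for $\mathbf{i}, \mathbf{a} \in S$. -/
/-- For invertible lower triangular matrices `B k` and a downward
closed subset `S` of the product index set, the `S × S` block of the Kronecker
product matrix `M` is invertible and its inverse has entries
`∏ k, (B k)⁻¹ (i k) (a k)`. -/
theorem kron_restricted_inverse {F : Type*} [Field F] (D : ℕ) (hD : 1 ≤ D)
    (n : Fin D → ℕ)
    (B : ∀ k : Fin D, Matrix (Fin (n k)) (Fin (n k)) F)
    (hinv : ∀ k, IsUnit (B k))
    (hlow : ∀ k : Fin D, ∀ a i : Fin (n k), a < i → B k a i = 0)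
    (S : Set ((k : Fin D) → Fin (n k))) [DecidablePred (· ∈ S)]
    (hS : ∀ i ∈ S, ∀ a : (k : Fin D) → Fin (n k), (∀ k, a k ≤ i k) → a ∈ S)
    (M : Matrix ((k : Fin D) → Fin (n k)) ((k : Fin D) → Fin (n k)) F)
    (hM : ∀ a i : (k : Fin D) → Fin (n k), M a i = ∏ k, B k (a k) (i k)) :
    IsUnit (M.submatrix (Subtype.val : S → _) (Subtype.val : S → _)) ∧
      ∀ i a : S,
        (M.submatrix (Subtype.val : S → _) (Subtype.val : S → _))⁻¹ i a =
          ∏ k, (B k)⁻¹ (i.1 k) (a.1 k) := by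
  classical
  set A := M.submatrix (Subtype.val : S → _) (Subtype.val : S → _) with hA
  set N : Matrix S S F := fun i a => ∏ k, (B k)⁻¹ (i.1 k) (a.1 k) with hN
  have key : A * N = 1 := by
    ext i j
    rw [Matrix.mul_apply]
    have h1 : ∀ a : S, A i a * N a j =
        ∏ k, (B k (i.1 k) (a.1 k) * (B k)⁻¹ (a.1 k) (j.1 k)) := by
      intro a
      simp only [hA, hN, Matrix.submatrix_apply, hM, Finset.prod_mul_distrib]
    simp only [h1]
    have hvanish : ∀ a : (k : Fin D) → Fin (n k), a ∉ S →
        (∏ k, (B k (i.1 k) (a k) * (B k)⁻¹ (a k) (j.1 k))) = 0 := by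
      intro a haS
      have : ∃ k, i.1 k < a k := by
        by_contra h
        push_neg at h
        exact haS (hS i.1 i.2 a fun k => (h k))
      obtain ⟨k, hk⟩ := this
      apply Finset.prod_eq_zero (Finset.mem_univ k)
      rw [hlow k _ _ hk, zero_mul]
    have h2 : ∑ a : S, ∏ k, (B k (i.1 k) (a.1 k) * (B k)⁻¹ (a.1 k) (j.1 k)) =
        ∑ a : (k : Fin D) → Fin (n k),
          ∏ k, (B k (i.1 k) (a k) * (B k)⁻¹ (a k) (j.1 k)) := by
      rw [← Finset.sum_subtype (p := (· ∈ S)) (s := Finset.univ.filter (· ∈ S))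
        (by simp) (fun a => ∏ k, (B k (i.1 k) (a k) * (B k)⁻¹ (a k) (j.1 k)))]
      apply Finset.sum_subset (Finset.filter_subset _ _)
      intro a _ ha
      exact hvanish a (by simpa using ha)
    rw [h2, ← Fintype.prod_sum (fun k x => B k (i.1 k) x * (B k)⁻¹ x (j.1 k))]
    have h3 : ∀ k, (∑ x, B k (i.1 k) x * (B k)⁻¹ x (j.1 k)) =
        (1 : Matrix (Fin (n k)) (Fin (n k)) F) (i.1 k) (j.1 k) := by
      intro k
      rw [← Matrix.mul_apply,
        Matrix.mul_nonsing_inv _ ((Matrix.isUnit_iff_isUnit_det _).mp (hinv k))]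
    simp only [h3, Matrix.one_apply]
    by_cases hij : i = j
    · subst hij; simp
    · have : ∃ k, i.1 k ≠ j.1 k := by
        by_contra h
        push_neg at h
        exact hij (Subtype.ext (funext h))
      obtain ⟨k, hk⟩ := this
      rw [if_neg hij]
      exact Finset.prod_eq_zero (Finset.mem_univ k) (by rw [if_neg hk])
  refine ⟨(Matrix.isUnit_iff_isUnit_det _).mpr (Matrix.isUnit_det_of_right_inverse key), fun i a => ?_⟩
  rw [Matrix.inv_eq_right_inv key]
end
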